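/- Let t ≥ 1 and s ≥ 1, and let B be the simple graph consisting of two vertex-disjoint paths P = p_0 p_1 ⋯ p_{3t−3} (on 3t−2 vertices) and Q = q_0 q_1 ⋯ q_{3s+1} (on 3s+2 vertices), together with the single additional edge p_{3t−3} q_0. Then in every conditional (3,2)-coloring c of B: all vertices p_{3j} for 0 ≤ j ≤ t−1 receive the same color; all vertices q_{3j} for 0 ≤ j ≤ s receive the same color; and these two common colors are distinct. -/

import Mathlib

/-- A conditional `(k,r)`-coloring (with color type `α` of size `k`):
(C1) adjacent vertices get different colors, and
(C2) every vertex `v` sees at least `min (d v) r` distinct colors on its neighborhood. -/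
def IsCondColoring {V α : Type*} (G : SimpleGraph V) (r : ℕ) (c : V → α) : Prop :=
  (∀ ⦃u v : V⦄, G.Adj u v → c u ≠ c v) ∧
  ∀ v : V, min (G.neighborSet v).ncard r ≤ (c '' G.neighborSet v).ncard

/-- The `r`-th order conditional chromatic number `χ_r(G)`. -/
noncomputable def condChromaticNumber {V : Type*} (G : SimpleGraph V) (r : ℕ) : ℕ∞ :=
  ⨅ k ∈ {k : ℕ | ∃ c : V → Fin k, IsCondColoring G r c}, (k : ℕ∞)

/-- The building block `B`: the disjoint union of a path `p_0 ⋯ p_{3t-3}` on `3t-2`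
vertices and a path `q_0 ⋯ q_{3s+1}` on `3s+2` vertices, plus the edge `p_{3t-3} q_0`. -/
def blockB (t s : ℕ) : SimpleGraph (Fin (3 * t - 2) ⊕ Fin (3 * s + 2)) :=
  SimpleGraph.fromRel (fun a b =>
    match a, b with
    | Sum.inl i, Sum.inl j => (i : ℕ) + 1 = (j : ℕ)
    | Sum.inr i, Sum.inr j => (i : ℕ) + 1 = (j : ℕ)
    | Sum.inl i, Sum.inr j => (i : ℕ) = 3 * t - 3 ∧ (j : ℕ) = 0
    | Sum.inr _, Sum.inl _ => False)

/-- combined path vertex -/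
def vtx (t s i : ℕ) : Fin (3 * t - 2) ⊕ Fin (3 * s + 2) :=
  if h : i < 3 * t - 2 then Sum.inl ⟨i, h⟩
  else Sum.inr ⟨min (i - (3 * t - 2)) (3 * s + 1), by omega⟩

lemma vtx_lt {t s i : ℕ} (h : i < 3 * t - 2) : vtx t s i = Sum.inl ⟨i, h⟩ := by
  simp [vtx, h]

lemma vtx_ge {t s i : ℕ} (h : ¬ i < 3 * t - 2) (h2 : i ≤ 3 * t + 3 * s - 1) (ht : 1 ≤ t) :
    vtx t s i = Sum.inr ⟨i - (3 * t - 2), by omega⟩ := by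
  simp only [vtx, dif_neg h]
  congr 1
  ext
  simp
  omega

lemma vtx_ne {t s i i' : ℕ} (ht : 1 ≤ t) (h : i < i') (h2 : i' ≤ 3 * t + 3 * s - 1) :
    vtx t s i ≠ vtx t s i' := by
  by_cases h1 : i < 3 * t - 2 <;> by_cases h1' : i' < 3 * t - 2
  · rw [vtx_lt h1, vtx_lt h1']; simp [Fin.ext_iff]; omega
  · rw [vtx_lt h1, vtx_ge h1' h2 ht]; simp
  · omega
  · rw [vtx_ge h1 (by omega) ht, vtx_ge h1' h2 ht]; simp [Fin.ext_iff]; omega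

lemma adj_vtx {t s : ℕ} (ht : 1 ≤ t) {i : ℕ} (h : i + 1 ≤ 3 * t + 3 * s - 1) :
    (blockB t s).Adj (vtx t s i) (vtx t s (i + 1)) := by
  rw [blockB, SimpleGraph.fromRel_adj]
  refine ⟨vtx_ne ht (by omega) h, Or.inl ?_⟩
  by_cases h1 : i < 3 * t - 2 <;> by_cases h1' : i + 1 < 3 * t - 2
  · rw [vtx_lt h1, vtx_lt h1']
  · rw [vtx_lt h1, vtx_ge h1' h ht]; exact ⟨by simp; omega, by simp; omega⟩
  · omega
  · rw [vtx_ge h1 (by omega) ht, vtx_ge h1' h ht]; simp; omega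

lemma nbr_vtx {t s : ℕ} (ht : 1 ≤ t) {i : ℕ} (h : i + 2 ≤ 3 * t + 3 * s - 1)
    (x : Fin (3 * t - 2) ⊕ Fin (3 * s + 2))
    (hadj : (blockB t s).Adj (vtx t s (i + 1)) x) :
    x = vtx t s i ∨ x = vtx t s (i + 2) := by
  rw [blockB, SimpleGraph.fromRel_adj] at hadj
  obtain ⟨-, hrel⟩ := hadj
  by_cases h1 : i + 1 < 3 * t - 2
  · rw [vtx_lt h1] at hrel
    rcases x with j | j
    · have : (j : ℕ) = i ∨ (j : ℕ) = i + 2 := by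
        rcases hrel with h' | h' <;> simp at h' <;> omega
      rcases this with hj | hj
      · left; rw [vtx_lt (show i < 3 * t - 2 by omega)]
        simp [Fin.ext_iff, hj]
      · right; rw [vtx_lt (show i + 2 < 3 * t - 2 from hj ▸ j.isLt)]
        simp [Fin.ext_iff, hj]
    · have : i + 1 = 3 * t - 3 ∧ (j : ℕ) = 0 := by
        rcases hrel with h' | h' <;> simp at h' <;> exact ⟨h'.1, by simp [h'.2]⟩
      right
      rw [vtx_ge (by omega) h ht]
      simp [Fin.ext_iff]
      omega
  · rw [vtx_ge h1 (by omega) ht] at hrel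
    rcases x with j | j
    · have : (j : ℕ) = 3 * t - 3 ∧ i + 1 - (3 * t - 2) = 0 := by
        rcases hrel with h' | h' <;> simp at h' <;> tauto
      left
      rw [vtx_lt (show i < 3 * t - 2 by omega)]
      simp [Fin.ext_iff]
      omega
    · have : (j : ℕ) = i + 1 - (3 * t - 2) + 1 ∨ (j : ℕ) + 1 = i + 1 - (3 * t - 2) := by
        rcases hrel with h' | h' <;> simp at h' <;> omega
      rcases this with hj | hj
      · right; rw [vtx_ge (by omega) h ht]; simp [Fin.ext_iff]; omega
      · left; rw [vtx_ge (by omega) (by omega) ht]; simp [Fin.ext_iff]; omega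

lemma key {V : Type*} {G : SimpleGraph V} {c : V → Fin 3} (hc : IsCondColoring G 2 c)
    {u v w : V} (huv : G.Adj u v) (hvw : G.Adj v w) (huw : u ≠ w)
    (hnb : ∀ x, G.Adj v x → x = u ∨ x = w) : c u ≠ c w := by
  have hN : G.neighborSet v = {u, w} := by
    ext x
    simp only [SimpleGraph.mem_neighborSet, Set.mem_insert_iff, Set.mem_singleton_iff]
    constructor
    · exact hnb x
    · rintro (rfl | rfl); exacts [huv.symm, hvw]
  have h2 := hc.2 v
  rw [hN, Set.ncard_pair huw, Set.image_pair] at h2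
  intro he
  rw [he] at h2
  simp at h2

lemma fin3_pigeon : ∀ a b d e : Fin 3, a ≠ b → b ≠ d → a ≠ d → d ≠ e → b ≠ e → e = a := by
  intro a b d e h1 h2 h3 h4 h5
  fin_cases a <;> fin_cases b <;> fin_cases d <;> fin_cases e <;> simp_all

lemma step {t s : ℕ} (ht : 1 ≤ t) {c : Fin (3 * t - 2) ⊕ Fin (3 * s + 2) → Fin 3}
    (hc : IsCondColoring (blockB t s) 2 c) {i : ℕ} (h : i + 3 ≤ 3 * t + 3 * s - 1) :
    c (vtx t s (i + 3)) = c (vtx t s i) := by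
  have a01 := adj_vtx ht (t := t) (s := s) (i := i) (by omega)
  have a12 := adj_vtx ht (t := t) (s := s) (i := i + 1) (by omega)
  have a23 := adj_vtx ht (t := t) (s := s) (i := i + 2) (by omega)
  have h02 : c (vtx t s i) ≠ c (vtx t s (i + 2)) :=
    key hc a01 a12 (vtx_ne ht (by omega) (by omega))
      (fun x hx => nbr_vtx ht (by omega) x hx)
  have h13 : c (vtx t s (i + 1)) ≠ c (vtx t s (i + 3)) :=
    key hc a12 (show (blockB t s).Adj (vtx t s (i + 2)) (vtx t s (i + 3)) from a23)
      (vtx_ne ht (by omega) (by omega))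
      (fun x hx => by
        have := nbr_vtx ht (i := i + 1) (by omega) x (by exact hx)
        simpa using this)
  exact fin3_pigeon _ _ _ _ (hc.1 a01) (hc.1 a12) h02 (hc.1 a23) h13

lemma per3 {t s : ℕ} (ht : 1 ≤ t) {c : Fin (3 * t - 2) ⊕ Fin (3 * s + 2) → Fin 3}
    (hc : IsCondColoring (blockB t s) 2 c) (j r : ℕ) (h : 3 * j + r ≤ 3 * t + 3 * s - 1) :
    c (vtx t s (3 * j + r)) = c (vtx t s r) := by
  induction j with
  | zero => simp
  | succ n ih =>
      have : 3 * (n + 1) + r = (3 * n + r) + 3 := by ring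
      rw [this, step ht hc (by omega), ih (by omega)]

/-- In every conditional `(3,2)`-coloring of `B`: all `p_{3j}` get one common color,
all `q_{3j}` get one common color, and these two colors are distinct. -/
theorem stmt_10 (t s : ℕ) (ht : 1 ≤ t) (hs : 1 ≤ s)
    (c : Fin (3 * t - 2) ⊕ Fin (3 * s + 2) → Fin 3)
    (hc : IsCondColoring (blockB t s) 2 c) :
    (∀ j j' : ℕ, ∀ (hj : j ≤ t - 1) (hj' : j' ≤ t - 1),
      c (Sum.inl ⟨3 * j, by omega⟩) = c (Sum.inl ⟨3 * j', by omega⟩)) ∧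
    (∀ j j' : ℕ, ∀ (hj : j ≤ s) (hj' : j' ≤ s),
      c (Sum.inr ⟨3 * j, by omega⟩) = c (Sum.inr ⟨3 * j', by omega⟩)) ∧
    c (Sum.inl ⟨0, by omega⟩) ≠ c (Sum.inr ⟨0, by omega⟩) := by
  have hp : ∀ j : ℕ, j ≤ t - 1 → ∀ (h : 3 * j < 3 * t - 2),
      c (Sum.inl ⟨3 * j, h⟩) = c (vtx t s 0) := by
    intro j hj h
    have : Sum.inl (β := Fin (3 * s + 2)) ⟨3 * j, h⟩ = vtx t s (3 * j + 0) := by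
      rw [vtx_lt (show 3 * j + 0 < 3 * t - 2 by omega)]
      simp
    rw [this, per3 ht hc j 0 (by omega)]
  have hq : ∀ j : ℕ, j ≤ s → ∀ (h : 3 * j < 3 * s + 2),
      c (Sum.inr ⟨3 * j, h⟩) = c (vtx t s 1) := by
    intro j hj h
    have : Sum.inr (α := Fin (3 * t - 2)) ⟨3 * j, h⟩ = vtx t s (3 * (t - 1 + j) + 1) := by
      rw [vtx_ge (show ¬ 3 * (t - 1 + j) + 1 < 3 * t - 2 by omega) (by omega) ht]
      simp [Fin.ext_iff]
      omega
    rw [this, per3 ht hc (t - 1 + j) 1 (by omega)]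
  refine ⟨fun j j' hj hj' => by rw [hp j hj, hp j' hj'],
          fun j j' hj hj' => by rw [hq j hj, hq j' hj'], ?_⟩
  have h0 : c (Sum.inl (β := Fin (3 * s + 2)) ⟨0, by omega⟩) = c (vtx t s 0) := by
    have := hp 0 (by omega) (by omega)
    simpa using this
  have h1 : c (Sum.inr (α := Fin (3 * t - 2)) ⟨0, by omega⟩) = c (vtx t s 1) := by
    have := hq 0 (by omega) (by omega)
    simpa using this
  rw [h0, h1]
  exact hc.1 (adj_vtx ht (i := 0) (by omega))
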